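/- Let G be a graph with n vertices, S a symmetry group in dimension d, Φ : S -> Aut(G) a homomorphism, and let (G,p) be a framework of type Φ, i.e., M_x p_i = p_{Φ(x)(v_i)} for all x in S and all vertices v_i, where M_x is the orthogonal matrix of x. Then the rigidity matrix satisfies the equivariance relation R(G,p) H_e(x) = H_i(x) R(G,p) for all x in S, where H_e(x) is the external representation matrix and H_i(x) the internal representation matrix. -/

import Mathlib

/-- The rigidity matrix of a framework (configuration given vertex-wise). -/
def rigidityMatrix (n d : ℕ) (E : Finset (Fin n × Fin n)) (p : Fin n → Fin d → ℝ) :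
    Matrix E (Fin n × Fin d) ℝ :=
  Matrix.of fun e ka =>
    if ka.1 = e.1.1 then p e.1.1 ka.2 - p e.1.2 ka.2
    else if ka.1 = e.1.2 then p e.1.2 ka.2 - p e.1.1 ka.2
    else 0

/-- The external representation matrix `H_e(x)`: obtained from the transpose of the
permutation matrix of `Φ(x)` (acting on vertices via `π`) by replacing each `1` with
the orthogonal matrix `M_x`. -/
def externalRep (n d : ℕ) {S : Type*} (M : S → Matrix (Fin d) (Fin d) ℝ)
    (π : S → Equiv.Perm (Fin n)) (x : S) :
    Matrix (Fin n × Fin d) (Fin n × Fin d) ℝ :=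
  Matrix.of fun ka lb => if lb.1 = (π x)⁻¹ ka.1 then M x ka.2 lb.2 else 0

/-- The internal representation matrix `H_i(x)`: the transpose of the permutation
matrix of the permutation `τ x` induced on the edge set by `Φ(x)`. -/
def internalRep {S : Type*} {n : ℕ} (E : Finset (Fin n × Fin n))
    (τ : S → Equiv.Perm E) (x : S) : Matrix E E ℝ :=
  Matrix.of fun e f => if f = (τ x)⁻¹ e then 1 else 0

/-- for a framework `(G,p)` of type `Φ` for a symmetry group `S`, the
rigidity matrix is equivariant: `R(G,p) H_e(x) = H_i(x) R(G,p)` for all `x ∈ S`. -/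
theorem rigidityMatrix_equivariant
    (n d : ℕ) (E : Finset (Fin n × Fin n)) {S : Type*} [Group S]
    (M : S → Matrix (Fin d) (Fin d) ℝ)
    (hMorth : ∀ x, M x ∈ Matrix.orthogonalGroup (Fin d) ℝ)
    (hMmul : ∀ x y, M (x * y) = M x * M y)
    (π : S → Equiv.Perm (Fin n))
    (hπmul : ∀ x y, π (x * y) = π x * π y)
    (τ : S → Equiv.Perm E)
    (hτ : ∀ (x : S) (e : E),
      ((τ x e : Fin n × Fin n) = (π x e.1.1, π x e.1.2)) ∨
      ((τ x e : Fin n × Fin n) = (π x e.1.2, π x e.1.1)))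
    (p : Fin n → Fin d → ℝ)
    (hp : ∀ (x : S) (k : Fin n), (M x).mulVec (p k) = p (π x k)) :
    ∀ x : S,
      rigidityMatrix n d E p * externalRep n d M π x =
        internalRep E τ x * rigidityMatrix n d E p := by

  have hM1 : M 1 = 1 := by
    have h := hMmul 1 1
    rw [one_mul] at h
    have h2 : M 1 * star (M 1) = 1 := (Matrix.mem_orthogonalGroup_iff _ _).mp (hMorth 1)
    calc M 1 = M 1 * (M 1 * star (M 1)) := by rw [h2, mul_one]
    _ = (M 1 * M 1) * star (M 1) := by rw [mul_assoc]
    _ = M 1 * star (M 1) := by rw [← h]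
    _ = 1 := h2
  have hπ1 : π 1 = 1 := by
    have h := hπmul 1 1
    rw [one_mul] at h
    exact (left_eq_mul.mp h)
  have hπinv : ∀ x : S, π x⁻¹ = (π x)⁻¹ := by
    intro x
    have h : π x * π x⁻¹ = 1 := by rw [← hπmul, mul_inv_cancel, hπ1]
    exact ((eq_inv_of_mul_eq_one_left (by rw [← hπmul, inv_mul_cancel, hπ1])))
  have hMinv : ∀ x : S, M x⁻¹ = star (M x) := by
    intro x
    have h1 : M x * M x⁻¹ = 1 := by rw [← hMmul, mul_inv_cancel, hM1]
    have h2 : star (M x) * M x = 1 := (Matrix.mem_orthogonalGroup_iff' _ _).mp (hMorth x)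
    calc M x⁻¹ = (star (M x) * M x) * M x⁻¹ := by rw [h2, one_mul]
    _ = star (M x) * (M x * M x⁻¹) := by rw [mul_assoc]
    _ = star (M x) := by rw [h1, mul_one]
  have hp' : ∀ (x : S) (k : Fin n) (b : Fin d),
      (∑ a, p k a * M x a b) = p ((π x)⁻¹ k) b := by
    intro x k b
    have h := congrFun (hp x⁻¹ k) b
    rw [hπinv] at h
    rw [← h, Matrix.mulVec, dotProduct, hMinv]
    apply Finset.sum_congr rfl
    intro a _
    rw [Matrix.star_apply, star_trivial, mul_comm]
  intro x
  ext e ⟨l, b⟩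
  rw [Matrix.mul_apply, Matrix.mul_apply]
  have hRHS : (∑ f, internalRep E τ x e f * rigidityMatrix n d E p f (l, b))
      = rigidityMatrix n d E p ((τ x)⁻¹ e) (l, b) := by
    simp only [internalRep, Matrix.of_apply, ite_mul, one_mul, zero_mul]
    rw [Finset.sum_ite_eq' Finset.univ]
    simp
  rw [hRHS]
  have hcond : ∀ k : Fin n, (l = (π x)⁻¹ k) ↔ (k = π x l) := by
    intro k
    constructor
    · intro h; rw [h]; exact (Equiv.apply_symm_apply _ _).symm
    · intro h; rw [h]; exact (Equiv.symm_apply_apply _ _).symm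
  have hLHS : (∑ ka : Fin n × Fin d,
      rigidityMatrix n d E p e ka * externalRep n d M π x ka (l, b))
      = ∑ a, rigidityMatrix n d E p e (π x l, a) * M x a b := by
    rw [Fintype.sum_prod_type]
    simp only [externalRep, Matrix.of_apply]
    have key : ∀ k : Fin n, (∑ a, rigidityMatrix n d E p e (k, a) *
        (if l = (π x)⁻¹ k then M x a b else 0))
        = if k = π x l then ∑ a, rigidityMatrix n d E p e (k, a) * M x a b else 0 := by
      intro k
      by_cases h : k = π x l
      · subst h
        simp [Equiv.symm_apply_apply]
      · have h2 : ¬ (l = (π x)⁻¹ k) := fun hh => h ((hcond k).mp hh)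
        simp only [h, h2, if_false, mul_zero, Finset.sum_const_zero]
    rw [Finset.sum_congr rfl (fun k _ => key k), Finset.sum_ite_eq' Finset.univ]
    simp
  rw [hLHS]
  set f := (τ x)⁻¹ e with hf
  have hef : τ x f = e := Equiv.apply_symm_apply _ _
  have hinj : ∀ u v : Fin n, (π x u = π x v) ↔ u = v := fun u v => (π x).injective.eq_iff
  have hsum : ∀ u v : Fin n,
      (∑ a, (p (π x u) a - p (π x v) a) * M x a b) = p u b - p v b := by
    intro u v
    have h1 := hp' x (π x u) b
    have h2 := hp' x (π x v) b
    rw [Equiv.Perm.inv_def, Equiv.symm_apply_apply] at h1 h2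
    calc (∑ a, (p (π x u) a - p (π x v) a) * M x a b)
        = (∑ a, p (π x u) a * M x a b) - (∑ a, p (π x v) a * M x a b) := by
          rw [← Finset.sum_sub_distrib]
          exact Finset.sum_congr rfl fun a _ => by ring
    _ = p u b - p v b := by rw [h1, h2]
  rcases hτ x f with hc | hc <;> rw [hef] at hc
  · have he1 : (e : Fin n × Fin n).1 = π x (f : Fin n × Fin n).1 := congrArg Prod.fst hc
    have he2 : (e : Fin n × Fin n).2 = π x (f : Fin n × Fin n).2 := congrArg Prod.snd hc
    simp only [rigidityMatrix, Matrix.of_apply, he1, he2, hinj]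
    split_ifs <;> simp_all [hsum]
  · have he1 : (e : Fin n × Fin n).1 = π x (f : Fin n × Fin n).2 := congrArg Prod.fst hc
    have he2 : (e : Fin n × Fin n).2 = π x (f : Fin n × Fin n).1 := congrArg Prod.snd hc
    simp only [rigidityMatrix, Matrix.of_apply, he1, he2, hinj]
    split_ifs <;> simp_all [hsum]
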